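/- Let ϑ be an irrational real number and γ ≥ 2 a real number such that there exists κ > 0 with |ϑ − r/q| ≥ κ/q^γ for all integers r and q ≥ 1 with gcd(r, q) = 1. Then there exist constants C > 0 and n₀ such that for every integer n ≥ n₀ and every subinterval I of [0, 1], the number of integers ν with 1 ≤ ν ≤ n and fract(νϑ) ∈ I differs from n·|I| by at most C n^{1 − 1/γ}, where fract denotes the fractional part and |I| the length of I. -/

import Mathlib

open scoped Classical in
theorem grid_count (q : ℕ) (hq : 1 ≤ q) (p : ℤ) (hpq : Int.gcd p (q:ℤ) = 1)
    (a : ℕ) (α u v : ℝ) (huv : u ≤ v) (hlen : v - u ≤ 1) :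
    ((((Finset.Ioc a (a+q)).filter
        (fun ν : ℕ => ∃ k : ℤ, u ≤ (ν:ℝ)*p/(q:ℝ) + α - k ∧ (ν:ℝ)*p/(q:ℝ) + α - k < v)).card : ℤ))
      = ⌈(q:ℝ)*(v-α)⌉ - ⌈(q:ℝ)*(u-α)⌉ := by
  have hq0 : (0:ℝ) < q := by exact_mod_cast hq
  set A : ℤ := ⌈(q:ℝ)*(u-α)⌉ with hA
  set B : ℤ := ⌈(q:ℝ)*(v-α)⌉ with hB
  -- uniqueness of the witness k
  have hk_eq : ∀ (ν : ℕ) (k : ℤ), u ≤ (ν:ℝ)*p/(q:ℝ) + α - k → (ν:ℝ)*p/(q:ℝ) + α - k < v →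
      k = ⌊(ν:ℝ)*p/(q:ℝ) + α - u⌋ := by
    intro ν k h1 h2
    symm
    rw [Int.floor_eq_iff]
    constructor
    · linarith
    · linarith
  -- basic identity
  have hdiv : ∀ ν : ℕ, (q:ℝ) * ((ν:ℝ)*p/(q:ℝ)) = (ν:ℝ)*p := by
    intro ν; field_simp
  have key : (((Finset.Ioc a (a+q)).filter
      (fun ν : ℕ => ∃ k : ℤ, u ≤ (ν:ℝ)*p/(q:ℝ) + α - k ∧ (ν:ℝ)*p/(q:ℝ) + α - k < v)).card)
      = (Finset.Ico A B).card := by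
    refine Finset.card_bij (fun (ν : ℕ) (_ : ν ∈ _) => (ν : ℤ)*p - (q:ℤ)*⌊(ν:ℝ)*p/(q:ℝ) + α - u⌋) ?_ ?_ ?_
    · -- maps into Ico A B
      rintro ν hν
      rw [Finset.mem_filter] at hν
      obtain ⟨hmem, k, h1, h2⟩ := hν
      show (ν:ℤ)*p - (q:ℤ)*⌊(ν:ℝ)*p/(q:ℝ) + α - u⌋ ∈ Finset.Ico A B
      rw [← hk_eq ν k h1 h2]
      have hj1 : (q:ℝ)*(u-α) ≤ ((ν : ℤ)*p - (q:ℤ)*k : ℤ) := by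
        push_cast
        nlinarith [mul_le_mul_of_nonneg_left h1 hq0.le, hdiv ν]
      have hj2 : (((ν : ℤ)*p - (q:ℤ)*k : ℤ) : ℝ) < (q:ℝ)*(v-α) := by
        push_cast
        nlinarith [mul_lt_mul_of_pos_left h2 hq0, hdiv ν]
      rw [Finset.mem_Ico]
      exact ⟨Int.ceil_le.mpr hj1, Int.lt_ceil.mpr hj2⟩
    · -- injective
      intro ν₁ hν₁ ν₂ hν₂ hf
      rw [Finset.mem_filter, Finset.mem_Ioc] at hν₁ hν₂
      have hdvd : (q:ℤ) ∣ ((ν₁:ℤ) - ν₂) * p := by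
        refine ⟨⌊(ν₁:ℝ)*p/(q:ℝ) + α - u⌋ - ⌊(ν₂:ℝ)*p/(q:ℝ) + α - u⌋, ?_⟩
        linear_combination hf
      have hdvd2 : (q:ℤ) ∣ ((ν₁:ℤ) - ν₂) := by
        have hcop : IsCoprime (q:ℤ) p := by
          rw [Int.isCoprime_iff_gcd_eq_one, Int.gcd_comm]; exact hpq
        exact hcop.dvd_of_dvd_mul_right hdvd
      by_contra hne
      have hne' : (ν₁:ℤ) - ν₂ ≠ 0 := by
        intro h; apply hne; omega
      have := Int.le_of_dvd (abs_pos.mpr hne') ((dvd_abs _ _).mpr hdvd2)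
      have h1 := hν₁.1.1; have h2 := hν₁.1.2; have h3 := hν₂.1.1; have h4 := hν₂.1.2
      rcases abs_cases ((ν₁:ℤ) - (ν₂:ℤ)) with ⟨habs,_⟩|⟨habs,_⟩ <;> rw [habs] at this <;> omega
    · -- surjective
      intro j hj
      rw [Finset.mem_Ico] at hj
      -- build ν
      have hbez : p * Int.gcdA p (q:ℤ) + (q:ℤ) * Int.gcdB p (q:ℤ) = 1 := by
        have := Int.gcd_eq_gcd_ab p (q:ℤ)
        rw [hpq] at this
        exact_mod_cast this.symm
      set w : ℤ := j * Int.gcdA p (q:ℤ) with hw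
      have hqZ : (0:ℤ) < (q:ℤ) := by exact_mod_cast hq
      set ν : ℕ := a + 1 + ((w - ((a:ℤ)+1)) % (q:ℤ)).toNat with hνdef
      have hmod_nonneg : 0 ≤ (w - ((a:ℤ)+1)) % (q:ℤ) := Int.emod_nonneg _ (by omega)
      have hmod_lt : (w - ((a:ℤ)+1)) % (q:ℤ) < (q:ℤ) := Int.emod_lt_of_pos _ hqZ
      have hνZ : (ν:ℤ) = (a:ℤ) + 1 + (w - ((a:ℤ)+1)) % (q:ℤ) := by
        rw [hνdef]; push_cast [Int.toNat_of_nonneg hmod_nonneg]; ring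
      have hνmem : ν ∈ Finset.Ioc a (a+q) := by
        rw [Finset.mem_Ioc]; omega
      -- ν ≡ w [ZMOD q]
      have hcong : (q:ℤ) ∣ (ν:ℤ) - w := by
        rw [hνZ]
        have : (w - ((a:ℤ)+1)) % (q:ℤ) - (w - ((a:ℤ)+1)) = -((q:ℤ) * ((w - ((a:ℤ)+1)) / (q:ℤ))) := by
          rw [Int.emod_def]; ring
        have h2 : (a:ℤ) + 1 + (w - ((a:ℤ)+1)) % (q:ℤ) - w
            = -((q:ℤ) * ((w - ((a:ℤ)+1)) / (q:ℤ))) := by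
          rw [← this]; ring
        rw [h2]; exact dvd_neg.mpr (Dvd.intro _ rfl)
      have hνp : (q:ℤ) ∣ (ν:ℤ)*p - j := by
        have h1 : (q:ℤ) ∣ ((ν:ℤ) - w)*p := Dvd.dvd.mul_right hcong p
        have h2 : (q:ℤ) ∣ j * ((q:ℤ) * Int.gcdB p (q:ℤ)) := ⟨j * Int.gcdB p (q:ℤ), by ring⟩
        have : (ν:ℤ)*p - j = ((ν:ℤ) - w)*p - j * ((q:ℤ) * Int.gcdB p (q:ℤ)) := by
          rw [hw]; linear_combination j * hbez
        rw [this]; exact dvd_sub h1 h2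
      obtain ⟨k, hk⟩ := hνp
      have hkk : (ν:ℤ)*p - (q:ℤ)*k = j := by omega
      -- real bounds on j
      have hjA : (q:ℝ)*(u-α) ≤ (j:ℝ) := by
        calc (q:ℝ)*(u-α) ≤ (A:ℝ) := Int.le_ceil _
          _ ≤ (j:ℝ) := by exact_mod_cast hj.1
      have hjB : (j:ℝ) < (q:ℝ)*(v-α) := by
        have := Int.lt_ceil.mp hj.2
        exact_mod_cast this
      have hjr : ((ν:ℝ)*p - (q:ℝ)*k) = (j:ℝ) := by exact_mod_cast hkk
      have hcond1 : u ≤ (ν:ℝ)*p/(q:ℝ) + α - k := by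
        nlinarith [hdiv ν, hjA, hjr]
      have hcond2 : (ν:ℝ)*p/(q:ℝ) + α - k < v := by
        nlinarith [hdiv ν, hjB, hjr]
      refine ⟨ν, Finset.mem_filter.mpr ⟨hνmem, k, hcond1, hcond2⟩, ?_⟩
      show (ν:ℤ)*p - (q:ℤ)*⌊(ν:ℝ)*p/(q:ℝ) + α - u⌋ = j
      rw [← hk_eq ν k hcond1 hcond2]
      exact hkk
  rw [key, Int.card_Ico]
  have hAB : A ≤ B := Int.ceil_le_ceil (by nlinarith)
  omega


open scoped Classical in
theorem block_est (ϑ x y : ℝ) (I : Set ℝ) (hI1 : Set.Ioo x y ⊆ I) (hI2 : I ⊆ Set.Icc x y)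
    (hx : 0 ≤ x) (hxy : x ≤ y) (hy : y ≤ 1)
    (q : ℕ) (hq : 1 ≤ q) (p : ℤ) (hpq : Int.gcd p (q:ℤ) = 1)
    (δ : ℝ) (hδ : ϑ = (p:ℝ)/(q:ℝ) + δ) (hε0 : 0 < (q:ℝ)*|δ|) (hε1 : (q:ℝ)*((q:ℝ)*|δ|) ≤ 1)
    (a : ℕ) :
    |(((Finset.Ioc a (a+q)).filter (fun ν : ℕ => Int.fract ((ν:ℝ)*ϑ) ∈ I)).card : ℝ)
       - (q:ℝ)*(y-x)| ≤ 5 := by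
  have hq0 : (0:ℝ) < q := by exact_mod_cast hq
  set ε : ℝ := (q:ℝ)*|δ| with hεdef
  set α : ℝ := (a:ℝ)*δ with hαdef
  -- perturbation bound
  have hpert : ∀ ν : ℕ, ν ∈ Finset.Ioc a (a+q) → |((ν:ℝ)-(a:ℝ))*δ| ≤ ε := by
    intro ν hν
    rw [Finset.mem_Ioc] at hν
    have h1 : (a:ℝ) ≤ (ν:ℝ) := by exact_mod_cast hν.1.le
    have h2 : (ν:ℝ) ≤ (a:ℝ) + (q:ℝ) := by exact_mod_cast hν.2
    rw [abs_mul, abs_of_nonneg (by linarith : (0:ℝ) ≤ (ν:ℝ)-(a:ℝ))]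
    rw [hεdef]
    apply mul_le_mul_of_nonneg_right _ (abs_nonneg δ)
    linarith
  -- identity : ν*ϑ = ν*p/q + α + (ν-a)*δ
  have hid : ∀ ν : ℕ, (ν:ℝ)*ϑ = (ν:ℝ)*p/(q:ℝ) + α + ((ν:ℝ)-(a:ℝ))*δ := by
    intro ν; rw [hδ, hαdef]; ring
  -- lower bound
  have lower : (q:ℝ)*(y-x) - 5 ≤
      (((Finset.Ioc a (a+q)).filter (fun ν : ℕ => Int.fract ((ν:ℝ)*ϑ) ∈ I)).card : ℝ) := by
    by_cases hcase : x + 2*ε ≤ y - 2*ε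
    · have hsub : (Finset.Ioc a (a+q)).filter
          (fun ν : ℕ => ∃ k : ℤ, x + 2*ε ≤ (ν:ℝ)*p/(q:ℝ) + α - k ∧ (ν:ℝ)*p/(q:ℝ) + α - k < y - 2*ε)
          ⊆ (Finset.Ioc a (a+q)).filter (fun ν : ℕ => Int.fract ((ν:ℝ)*ϑ) ∈ I) := by
        intro ν hν
        rw [Finset.mem_filter] at hν ⊢
        obtain ⟨hmem, k, h1, h2⟩ := hν
        refine ⟨hmem, ?_⟩
        have hp := hpert ν hmem
        rw [abs_le] at hp
        have hval1 : x + ε ≤ (ν:ℝ)*ϑ - k := by rw [hid ν]; linarith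
        have hval2 : (ν:ℝ)*ϑ - k < y - ε := by rw [hid ν]; linarith
        have hfr : Int.fract ((ν:ℝ)*ϑ) = (ν:ℝ)*ϑ - k := by
          rw [show (ν:ℝ)*ϑ - (k:ℝ) = (ν:ℝ)*ϑ - (k:ℤ) by norm_num, ← Int.fract_sub_intCast ((ν:ℝ)*ϑ) k]
          exact Int.fract_eq_self.mpr ⟨by linarith, by linarith⟩
        apply hI1
        rw [hfr]
        exact ⟨by linarith, by linarith⟩
      have hgrid := grid_count q hq p hpq a α (x+2*ε) (y-2*ε) hcase (by linarith)
      have hcard := Finset.card_le_card hsub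
      have hge1 : ((q:ℝ)*((y-2*ε)-α)) - (((q:ℝ)*((x+2*ε)-α)) + 1)
          ≤ ((⌈(q:ℝ)*((y-2*ε)-α)⌉ : ℤ) : ℝ) - ((⌈(q:ℝ)*((x+2*ε)-α)⌉ : ℤ) : ℝ) := by
        have := Int.le_ceil ((q:ℝ)*((y-2*ε)-α))
        have := Int.ceil_lt_add_one ((q:ℝ)*((x+2*ε)-α))
        linarith
      have hcast : ((((Finset.Ioc a (a+q)).filter
          (fun ν : ℕ => ∃ k : ℤ, x + 2*ε ≤ (ν:ℝ)*p/(q:ℝ) + α - k ∧ (ν:ℝ)*p/(q:ℝ) + α - k < y - 2*ε)).card : ℝ))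
          = ((⌈(q:ℝ)*((y-2*ε)-α)⌉ : ℤ) : ℝ) - ((⌈(q:ℝ)*((x+2*ε)-α)⌉ : ℤ) : ℝ) := by
        exact_mod_cast congrArg (fun z : ℤ => (z:ℝ)) hgrid
      have hmono : ((((Finset.Ioc a (a+q)).filter
          (fun ν : ℕ => ∃ k : ℤ, x + 2*ε ≤ (ν:ℝ)*p/(q:ℝ) + α - k ∧ (ν:ℝ)*p/(q:ℝ) + α - k < y - 2*ε)).card : ℝ))
          ≤ (((Finset.Ioc a (a+q)).filter (fun ν : ℕ => Int.fract ((ν:ℝ)*ϑ) ∈ I)).card : ℝ) := by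
        exact_mod_cast hcard
      nlinarith [hε1]
    · -- y - x < 4 ε : trivial
      push_neg at hcase
      have : (q:ℝ)*(y-x) < (q:ℝ)*(4*ε) := by
        apply mul_lt_mul_of_pos_left _ hq0; linarith
      have hc : (0:ℝ) ≤ (((Finset.Ioc a (a+q)).filter (fun ν : ℕ => Int.fract ((ν:ℝ)*ϑ) ∈ I)).card : ℝ) :=
        Nat.cast_nonneg _
      nlinarith [hε1]
  -- upper bound
  have upper :
      (((Finset.Ioc a (a+q)).filter (fun ν : ℕ => Int.fract ((ν:ℝ)*ϑ) ∈ I)).card : ℝ)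
        ≤ (q:ℝ)*(y-x) + 5 := by
    by_cases hcase : y - x + 3*ε ≤ 1
    · have hsub : (Finset.Ioc a (a+q)).filter (fun ν : ℕ => Int.fract ((ν:ℝ)*ϑ) ∈ I)
          ⊆ (Finset.Ioc a (a+q)).filter
          (fun ν : ℕ => ∃ k : ℤ, x - ε ≤ (ν:ℝ)*p/(q:ℝ) + α - k ∧ (ν:ℝ)*p/(q:ℝ) + α - k < y + 2*ε) := by
        intro ν hν
        rw [Finset.mem_filter] at hν ⊢
        obtain ⟨hmem, hfr⟩ := hν
        refine ⟨hmem, ⌊(ν:ℝ)*ϑ⌋, ?_, ?_⟩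
        · have hp := hpert ν hmem
          rw [abs_le] at hp
          have hxf : x ≤ Int.fract ((ν:ℝ)*ϑ) := (hI2 hfr).1
          have : (ν:ℝ)*p/(q:ℝ) + α - ⌊(ν:ℝ)*ϑ⌋ = ((ν:ℝ)*ϑ - ⌊(ν:ℝ)*ϑ⌋) - ((ν:ℝ)-(a:ℝ))*δ := by
            rw [hid ν]; ring
          rw [this]
          have : Int.fract ((ν:ℝ)*ϑ) = (ν:ℝ)*ϑ - ⌊(ν:ℝ)*ϑ⌋ := rfl
          linarith [this ▸ hxf]
        · have hp := hpert ν hmem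
          rw [abs_le] at hp
          have hyf : Int.fract ((ν:ℝ)*ϑ) ≤ y := (hI2 hfr).2
          have heq : (ν:ℝ)*p/(q:ℝ) + α - ⌊(ν:ℝ)*ϑ⌋ = ((ν:ℝ)*ϑ - ⌊(ν:ℝ)*ϑ⌋) - ((ν:ℝ)-(a:ℝ))*δ := by
            rw [hid ν]; ring
          rw [heq]
          have hfr' : Int.fract ((ν:ℝ)*ϑ) = (ν:ℝ)*ϑ - ⌊(ν:ℝ)*ϑ⌋ := rfl
          rw [← hfr']
          linarith
      have hgrid := grid_count q hq p hpq a α (x-ε) (y+2*ε) (by linarith) (by linarith)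
      have hcard := Finset.card_le_card hsub
      have hle1 : ((⌈(q:ℝ)*((y+2*ε)-α)⌉ : ℤ) : ℝ) - ((⌈(q:ℝ)*((x-ε)-α)⌉ : ℤ) : ℝ)
          ≤ ((q:ℝ)*((y+2*ε)-α) + 1) - ((q:ℝ)*((x-ε)-α)) := by
        have := Int.ceil_lt_add_one ((q:ℝ)*((y+2*ε)-α))
        have := Int.le_ceil ((q:ℝ)*((x-ε)-α))
        linarith
      have hcast : ((((Finset.Ioc a (a+q)).filter
          (fun ν : ℕ => ∃ k : ℤ, x - ε ≤ (ν:ℝ)*p/(q:ℝ) + α - k ∧ (ν:ℝ)*p/(q:ℝ) + α - k < y + 2*ε)).card : ℝ))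
          = ((⌈(q:ℝ)*((y+2*ε)-α)⌉ : ℤ) : ℝ) - ((⌈(q:ℝ)*((x-ε)-α)⌉ : ℤ) : ℝ) := by
        exact_mod_cast congrArg (fun z : ℤ => (z:ℝ)) hgrid
      have hmono : (((Finset.Ioc a (a+q)).filter (fun ν : ℕ => Int.fract ((ν:ℝ)*ϑ) ∈ I)).card : ℝ)
          ≤ ((((Finset.Ioc a (a+q)).filter
          (fun ν : ℕ => ∃ k : ℤ, x - ε ≤ (ν:ℝ)*p/(q:ℝ) + α - k ∧ (ν:ℝ)*p/(q:ℝ) + α - k < y + 2*ε)).card : ℝ)) := by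
        exact_mod_cast hcard
      nlinarith [hε1]
    · push_neg at hcase
      have hcard_le : (((Finset.Ioc a (a+q)).filter (fun ν : ℕ => Int.fract ((ν:ℝ)*ϑ) ∈ I)).card : ℝ)
          ≤ (q:ℝ) := by
        have h1 : ((Finset.Ioc a (a+q)).filter (fun ν : ℕ => Int.fract ((ν:ℝ)*ϑ) ∈ I)).card
            ≤ (Finset.Ioc a (a+q)).card := Finset.card_filter_le _ _
        have h2 : (Finset.Ioc a (a+q)).card = q := by
          rw [Nat.card_Ioc]; omega
        have := h1.trans h2.le
        exact_mod_cast this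
      have : (q:ℝ)*(1 - (y-x)) < (q:ℝ)*(3*ε) := by
        apply mul_lt_mul_of_pos_left _ hq0; linarith
      nlinarith [hε1]
  rw [abs_le]
  constructor <;> linarith

open scoped Classical in
theorem count_est (ϑ x y : ℝ) (I : Set ℝ) (hI1 : Set.Ioo x y ⊆ I) (hI2 : I ⊆ Set.Icc x y)
    (hx : 0 ≤ x) (hxy : x ≤ y) (hy : y ≤ 1)
    (q : ℕ) (hq : 1 ≤ q) (p : ℤ) (hpq : Int.gcd p (q:ℤ) = 1)
    (δ : ℝ) (hδ : ϑ = (p:ℝ)/(q:ℝ) + δ) (hε0 : 0 < (q:ℝ)*|δ|) (hε1 : (q:ℝ)*((q:ℝ)*|δ|) ≤ 1) :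
    ∀ n : ℕ, |(((Finset.Ioc 0 n).filter (fun ν : ℕ => Int.fract ((ν:ℝ)*ϑ) ∈ I)).card : ℝ)
        - (n:ℝ)*(y-x)| ≤ 5*((n:ℝ)/(q:ℝ)) + (q:ℝ) := by
  have hq0 : (0:ℝ) < q := by exact_mod_cast hq
  intro n
  induction n using Nat.strong_induction_on with
  | _ n ih =>
    by_cases hnq : n < q
    · -- base case
      have hcard : (((Finset.Ioc 0 n).filter (fun ν : ℕ => Int.fract ((ν:ℝ)*ϑ) ∈ I)).card : ℝ)
          ≤ (n:ℝ) := by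
        have h1 := (Finset.card_filter_le (Finset.Ioc 0 n)
          (fun ν : ℕ => Int.fract ((ν:ℝ)*ϑ) ∈ I)).trans (Nat.card_Ioc 0 n).le
        simp only [Nat.sub_zero] at h1
        exact_mod_cast h1
      have hc0 : (0:ℝ) ≤ (((Finset.Ioc 0 n).filter
          (fun ν : ℕ => Int.fract ((ν:ℝ)*ϑ) ∈ I)).card : ℝ) := Nat.cast_nonneg _
      have hn_le : (n:ℝ) ≤ (q:ℝ) := by
        have : n ≤ q := hnq.le
        exact_mod_cast this
      have hnyx1 : 0 ≤ (n:ℝ)*(y-x) := mul_nonneg (Nat.cast_nonneg n) (by linarith)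
      have hnyx2 : (n:ℝ)*(y-x) ≤ (n:ℝ) := by nlinarith [Nat.cast_nonneg (α := ℝ) n]
      rw [abs_le]
      have hdivpos : (0:ℝ) ≤ 5*((n:ℝ)/(q:ℝ)) := by positivity
      constructor <;> linarith
    · push_neg at hnq
      have hunion : Finset.Ioc 0 n = Finset.Ioc 0 (n-q) ∪ Finset.Ioc (n-q) n :=
        (Finset.Ioc_union_Ioc_eq_Ioc (Nat.zero_le _) (Nat.sub_le _ _)).symm
      have hdisj : Disjoint (Finset.Ioc 0 (n-q)) (Finset.Ioc (n-q) n) := by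
        simp only [Finset.disjoint_left, Finset.mem_Ioc]
        intro t h1 h2; omega
      rw [hunion, Finset.filter_union,
        Finset.card_union_of_disjoint (Finset.disjoint_filter_filter hdisj)]
      have hblock := block_est ϑ x y I hI1 hI2 hx hxy hy q hq p hpq δ hδ hε0 hε1 (n-q)
      rw [show (n-q) + q = n by omega] at hblock
      have hih := ih (n-q) (by omega)
      have hcast : ((n - q : ℕ) : ℝ) = (n:ℝ) - (q:ℝ) := by
        have : ((n - q : ℕ) : ℝ) = ((n:ℕ):ℝ) - ((q:ℕ):ℝ) := by
          push_cast [Nat.cast_sub hnq]; ring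
        exact this
      rw [hcast] at hih
      have hdiv : ((n:ℝ)-(q:ℝ))/(q:ℝ) = (n:ℝ)/(q:ℝ) - 1 := by field_simp
      rw [hdiv] at hih
      rw [abs_le] at hih hblock ⊢
      push_cast
      constructor <;> nlinarith [hih.1, hih.2, hblock.1, hblock.2]

/-- discrepancy bound `O(n^{1-1/γ})` for `(⟨νϑ⟩)_ν` when `ϑ` has
irrationality exponent at most `γ`. -/
theorem discrepancy_bound_of_irrationality_exponent
    (ϑ : ℝ) (hϑ : Irrational ϑ) (γ : ℝ) (hγ : 2 ≤ γ)
    (hirr : ∃ κ > (0 : ℝ), ∀ r : ℤ, ∀ q : ℕ, 1 ≤ q → Int.gcd r (q : ℤ) = 1 →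
      κ / (q : ℝ) ^ γ ≤ |ϑ - (r : ℝ) / (q : ℝ)|) :
    ∃ C > (0 : ℝ), ∃ n₀ : ℕ, ∀ n : ℕ, n₀ ≤ n →
      ∀ x y : ℝ, 0 ≤ x → x ≤ y → y ≤ 1 →
        ∀ I : Set ℝ, Set.Ioo x y ⊆ I → I ⊆ Set.Icc x y →
          |(({ν : ℕ | 1 ≤ ν ∧ ν ≤ n ∧ Int.fract ((ν : ℝ) * ϑ) ∈ I}.ncard : ℝ))
              - (n : ℝ) * (y - x)|
            ≤ C * (n : ℝ) ^ (1 - 1 / γ) := by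
  classical
  obtain ⟨κ, hκ, hK⟩ := hirr
  have hγ1 : (1:ℝ) < γ := by linarith
  have hγ0 : (0:ℝ) < γ := by linarith
  have hγ1' : γ - 1 ≠ 0 := by linarith
  set e : ℝ := 1/(γ-1) with he
  have he_pos : 0 < e := by rw [he]; apply div_pos one_pos; linarith
  have hκe : 0 < κ ^ (-e) := Real.rpow_pos_of_pos hκ _
  refine ⟨5 * κ ^ (-e) + 2, by linarith, 1, ?_⟩
  intro n hn x y hx hxy hy I hI1 hI2
  set s : ℝ := 1 - 1/γ with hs
  have hs_pos : 0 < s := by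
    rw [hs]
    have h1 : 1/γ < 1 := by rw [div_lt_one hγ0]; linarith
    linarith
  have hse : s * e = 1/γ := by rw [hs, he]; field_simp
  have hs1 : s + 1/γ = 1 := by rw [hs]; ring
  have hn1 : (1:ℝ) ≤ (n:ℝ) := by exact_mod_cast hn
  have hn0 : (0:ℝ) < (n:ℝ) := by linarith
  have hns1 : (1:ℝ) ≤ (n:ℝ)^s := Real.one_le_rpow hn1 hs_pos.le
  set N : ℕ := ⌈(n:ℝ)^s⌉₊ with hN
  have hN_pos : 0 < N := Nat.ceil_pos.mpr (by linarith)
  obtain ⟨r, hr1, hr2⟩ := Real.exists_rat_abs_sub_le_and_den_le ϑ hN_pos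
  set q : ℕ := r.den with hqdef
  set p : ℤ := r.num with hpdef
  have hq : 1 ≤ q := r.pos
  have hq0 : (0:ℝ) < (q:ℝ) := by exact_mod_cast hq
  have hgcd : Int.gcd p (q:ℤ) = 1 := by
    simpa [Int.gcd, hpdef, hqdef] using r.reduced
  set δ : ℝ := ϑ - (p:ℝ)/(q:ℝ) with hδdef
  have hδ : ϑ = (p:ℝ)/(q:ℝ) + δ := by rw [hδdef]; ring
  have hrcast : ((r:ℚ):ℝ) = (p:ℝ)/(q:ℝ) := by rw [Rat.cast_def]
  have hδ_abs : |δ| ≤ 1/(((N:ℝ)+1)*(q:ℝ)) := by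
    rw [hδdef, ← hrcast]
    exact hr1
  have hqN : (q:ℝ) ≤ (N:ℝ) := by exact_mod_cast hr2
  have hδ_ne : δ ≠ 0 := by
    intro h
    apply hϑ
    exact ⟨r, by rw [hrcast]; rw [hδdef] at h; linarith⟩
  have hδ_pos : 0 < |δ| := abs_pos.mpr hδ_ne
  have hε0 : 0 < (q:ℝ)*|δ| := mul_pos hq0 hδ_pos
  have hε1 : (q:ℝ)*((q:ℝ)*|δ|) ≤ 1 := by
    have hNq0 : (0:ℝ) < ((N:ℝ)+1)*(q:ℝ) := by positivity
    have key : (q:ℝ)*((q:ℝ)*(1/(((N:ℝ)+1)*(q:ℝ)))) = (q:ℝ)/((N:ℝ)+1) := by field_simp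
    have h1 : (q:ℝ)*((q:ℝ)*|δ|) ≤ (q:ℝ)*((q:ℝ)*(1/(((N:ℝ)+1)*(q:ℝ)))) :=
      mul_le_mul_of_nonneg_left (mul_le_mul_of_nonneg_left hδ_abs hq0.le) hq0.le
    have h2 : (q:ℝ)/((N:ℝ)+1) ≤ 1 := by
      rw [div_le_one (by linarith : (0:ℝ) < (N:ℝ)+1)]; linarith
    rw [key] at h1
    linarith
  -- lower bound on q
  have hlow : κ/(q:ℝ)^γ ≤ |δ| := by
    have := hK p q hq hgcd
    rwa [← hδdef] at this
  have hqγ : κ * ((N:ℝ)+1) ≤ (q:ℝ)^(γ-1) := by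
    have hrpow_pos : (0:ℝ) < (q:ℝ)^γ := Real.rpow_pos_of_pos hq0 γ
    have h1 : κ * (((N:ℝ)+1)*(q:ℝ)) ≤ (q:ℝ)^γ := by
      rw [div_le_iff₀ hrpow_pos] at hlow
      have h2 : |δ| * ((((N:ℝ)+1)*(q:ℝ))) ≤ 1 := by
        have hX : (0:ℝ) < ((N:ℝ)+1)*(q:ℝ) := by positivity
        have hcopy := hδ_abs
        rw [le_div_iff₀ hX] at hcopy
        linarith
      calc κ * (((N:ℝ)+1)*(q:ℝ)) ≤ (|δ| * (q:ℝ)^γ) * (((N:ℝ)+1)*(q:ℝ)) :=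
            mul_le_mul_of_nonneg_right hlow (by positivity)
        _ = (|δ| * (((N:ℝ)+1)*(q:ℝ))) * (q:ℝ)^γ := by ring
        _ ≤ 1 * (q:ℝ)^γ := mul_le_mul_of_nonneg_right h2 hrpow_pos.le
        _ = (q:ℝ)^γ := by ring
    have hsplit : (q:ℝ)^γ = (q:ℝ)^(γ-1) * (q:ℝ) := by
      rw [show γ = (γ-1)+1 by ring, Real.rpow_add hq0, Real.rpow_one]
      ring_nf
    rw [hsplit] at h1
    have h1' : (κ*((N:ℝ)+1))*(q:ℝ) ≤ (q:ℝ)^(γ-1)*(q:ℝ) := by nlinarith [h1]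
    exact le_of_mul_le_mul_right h1' hq0
  have hq_low : (κ * (n:ℝ)^s) ^ e ≤ (q:ℝ) := by
    have hNle : (n:ℝ)^s ≤ (N:ℝ) := Nat.le_ceil _
    have h1 : κ * (n:ℝ)^s ≤ (q:ℝ)^(γ-1) := by
      have h1a : κ * (n:ℝ)^s ≤ κ * ((N:ℝ)+1) :=
        mul_le_mul_of_nonneg_left (by linarith) hκ.le
      linarith
    have h2 : (κ * (n:ℝ)^s) ^ e ≤ ((q:ℝ)^(γ-1)) ^ e :=
      Real.rpow_le_rpow (by positivity) h1 he_pos.le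
    have h3 : ((q:ℝ)^(γ-1)) ^ e = (q:ℝ) := by
      rw [← Real.rpow_mul hq0.le]
      rw [show (γ-1)*e = 1 by rw [he]; field_simp]
      exact Real.rpow_one _
    rwa [h3] at h2
  -- counting
  have hcount := count_est ϑ x y I hI1 hI2 hx hxy hy q hq p hgcd δ hδ hε0 hε1 n
  have hset : {ν : ℕ | 1 ≤ ν ∧ ν ≤ n ∧ Int.fract ((ν : ℝ) * ϑ) ∈ I}
      = ↑((Finset.Ioc 0 n).filter (fun ν : ℕ => Int.fract ((ν:ℝ)*ϑ) ∈ I)) := by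
    ext ν
    simp only [Set.mem_setOf_eq, Finset.coe_filter, Finset.mem_Ioc]
    constructor
    · rintro ⟨h1, h2, h3⟩; exact ⟨⟨h1, h2⟩, h3⟩
    · rintro ⟨⟨h1, h2⟩, h3⟩; exact ⟨h1, h2, h3⟩
  rw [hset, Set.ncard_coe_finset]
  -- final bounds
  have hn_over_q : (n:ℝ)/(q:ℝ) ≤ κ^(-e) * (n:ℝ)^s := by
    rw [div_le_iff₀ hq0]
    have h2 : κ^(-e)*(n:ℝ)^s*((κ*(n:ℝ)^s)^e) ≤ κ^(-e)*(n:ℝ)^s*(q:ℝ) :=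
      mul_le_mul_of_nonneg_left hq_low (by positivity)
    have h3 : κ^(-e)*(n:ℝ)^s*((κ*(n:ℝ)^s)^e) = (n:ℝ) := by
      rw [Real.mul_rpow hκ.le (by positivity), ← Real.rpow_mul hn0.le, hse]
      rw [show κ^(-e)*(n:ℝ)^s*(κ^e*(n:ℝ)^(1/γ)) = (κ^(-e)*κ^e)*((n:ℝ)^s*(n:ℝ)^(1/γ)) by ring]
      rw [← Real.rpow_add hκ, ← Real.rpow_add hn0, hs1, Real.rpow_one]
      norm_num
    linarith
  have hq_up : (q:ℝ) ≤ 2*(n:ℝ)^s := by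
    have h1 : (N:ℝ) < (n:ℝ)^s + 1 := by
      have := Nat.ceil_lt_add_one (by positivity : (0:ℝ) ≤ (n:ℝ)^s)
      exact_mod_cast this
    linarith
  calc |(((Finset.Ioc 0 n).filter (fun ν : ℕ => Int.fract ((ν:ℝ)*ϑ) ∈ I)).card : ℝ)
        - (n:ℝ)*(y-x)| ≤ 5*((n:ℝ)/(q:ℝ)) + (q:ℝ) := hcount
    _ ≤ 5*(κ^(-e) * (n:ℝ)^s) + 2*(n:ℝ)^s := by
        have : 5*((n:ℝ)/(q:ℝ)) ≤ 5*(κ^(-e) * (n:ℝ)^s) := by linarith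
        linarith
    _ = (5 * κ ^ (-e) + 2) * (n:ℝ)^s := by ring
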